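/- Let C > 0, σ > 0, m, n ∈ ℕ, B ∈ ℝ^{m×n}, d ∈ ℝ^m and λ ∈ ℝ^m. Define φ : ℝ^n → ℝ by φ(w) = inf over s ∈ ℝ^m of L_σ(w, s; λ). Then φ is differentiable at every w ∈ ℝ^n, with gradient ∇φ(w) = w + Bᵀλ − σ·Bᵀ(s*(w) − B·w − d), where s*(w) ∈ ℝ^m is given componentwise, with z = B·w + d + λ/σ, by s*(w)_i = z_i − C/σ if z_i > C/σ, s*(w)_i = z_i if z_i < 0, and s*(w)_i = 0 if 0 ≤ z_i ≤ C/σ. -/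

import Mathlib

open RealInnerProductSpace Matrix

/-- View a plain vector `Fin m → ℝ` as an element of Euclidean space `ℝ^m`. -/
noncomputable def toEuc {m : ℕ} (v : Fin m → ℝ) : EuclideanSpace ℝ (Fin m) :=
  (EuclideanSpace.equiv (Fin m) ℝ).symm v

@[simp] lemma toEuc_apply {m : ℕ} (v : Fin m → ℝ) (i : Fin m) : toEuc v i = v i := rfl

lemma relu_sq_hasDerivAt (x : ℝ) :
    HasDerivAt (fun t : ℝ => max t 0 ^ 2) (2 * max x 0) x := by
  rcases lt_trichotomy x 0 with hx | hx | hx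
  · have : max x 0 = 0 := max_eq_right hx.le
    rw [this, mul_zero]
    have hev : (fun t : ℝ => max t 0 ^ 2) =ᶠ[nhds x] fun _ => (0:ℝ) := by
      filter_upwards [eventually_lt_nhds hx] with t ht
      simp [max_eq_right ht.le]
    exact (hasDerivAt_const x (0:ℝ)).congr_of_eventuallyEq hev
  · subst hx
    rw [max_self, mul_zero]
    rw [hasDerivAt_iff_isLittleO]
    rw [Asymptotics.isLittleO_iff]
    intro c hc
    have : ∀ᶠ t : ℝ in nhds 0, |t| ≤ c := by
      have := Metric.ball_mem_nhds (0:ℝ) hc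
      filter_upwards [this] with t ht
      simpa [Real.dist_eq] using (Metric.mem_ball.mp ht).le
    filter_upwards [this] with t ht
    have h1 : max t 0 ^ 2 ≤ t ^ 2 := by
      rcases le_total t 0 with h | h
      · simp [max_eq_right h]; positivity
      · simp [max_eq_left h]
    simp only [max_self, smul_eq_mul, mul_zero, sub_zero, Real.norm_eq_abs]
    have h2 : |max t 0 ^ 2 - 0 ^ 2| ≤ t ^ 2 := by
      simpa [abs_of_nonneg (by positivity : (0:ℝ) ≤ max t 0 ^ 2)] using h1
    calc |max t 0 ^ 2 - 0 ^ 2| ≤ t ^ 2 := h2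
      _ = |t| * |t| := by rw [← sq_abs, sq]
      _ ≤ c * |t| := mul_le_mul_of_nonneg_right ht (abs_nonneg t)
  · have : max x 0 = x := max_eq_left hx.le
    rw [this]
    have hev : (fun t : ℝ => max t 0 ^ 2) =ᶠ[nhds x] fun t => t ^ 2 := by
      filter_upwards [eventually_gt_nhds hx] with t ht
      simp [max_eq_left ht.le]
    have : HasDerivAt (fun t : ℝ => t ^ 2) (2 * x) x := by
      simpa using (hasDerivAt_pow 2 x)
    exact this.congr_of_eventuallyEq hev

lemma env_le {C σ : ℝ} (hC : 0 < C) (hσ : 0 < σ) (z s : ℝ) :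
    σ/2 * max z 0 ^ 2 - σ/2 * max (z - C/σ) 0 ^ 2 ≤ C * max s 0 + σ/2 * (s - z)^2 := by
  have hr : 0 < C/σ := div_pos hC hσ
  have hCr : C = σ * (C/σ) := by field_simp
  set r := C/σ with hrdef
  rcases le_total z 0 with hz | hz
  · have h1 : max z 0 = 0 := max_eq_right hz
    have h2 : max (z - r) 0 = 0 := max_eq_right (by linarith)
    rw [h1, h2]
    have : (0:ℝ) ≤ C * max s 0 := mul_nonneg hC.le (le_max_right s 0)
    nlinarith [sq_nonneg (s - z)]
  · rcases le_total z r with hzr | hzr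
    · have h1 : max z 0 = z := max_eq_left hz
      have h2 : max (z - r) 0 = 0 := max_eq_right (by linarith)
      rw [h1, h2]
      rcases le_total s 0 with hs | hs
      · have h3 : max s 0 = 0 := max_eq_right hs
        rw [h3]
        nlinarith [mul_nonneg (neg_nonneg.mpr hs) (by linarith : 0 ≤ 2*z - s)]
      · have h3 : max s 0 = s := max_eq_left hs
        rw [h3]
        nlinarith [mul_nonneg hs (by nlinarith : (0:ℝ) ≤ σ/2 * s + C - σ * z)]
    · have h1 : max z 0 = z := max_eq_left hz
      have h2 : max (z - r) 0 = z - r := max_eq_left (by linarith)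
      rw [h1, h2]
      rcases le_total s 0 with hs | hs
      · have h3 : max s 0 = 0 := max_eq_right hs
        rw [h3]
        nlinarith [mul_nonneg hσ.le (sq_nonneg (z - r)),
          mul_nonneg hσ.le (mul_nonneg (neg_nonneg.mpr hs) (by linarith : (0:ℝ) ≤ 2*z - s))]
      · have h3 : max s 0 = s := max_eq_left hs
        rw [h3]
        nlinarith [sq_nonneg (s - z + r)]

lemma env_eq {C σ : ℝ} (hC : 0 < C) (hσ : 0 < σ) (z s : ℝ)
    (h1 : C / σ < z → s = z - C / σ) (h2 : z < 0 → s = z)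
    (h3 : 0 ≤ z ∧ z ≤ C / σ → s = 0) :
    C * max s 0 + σ/2 * (s - z)^2
      = σ/2 * max z 0 ^ 2 - σ/2 * max (z - C/σ) 0 ^ 2 := by
  have hr : 0 < C/σ := div_pos hC hσ
  have hCr : C = σ * (C/σ) := by field_simp
  set r := C/σ with hrdef
  rcases lt_trichotomy z 0 with hz | hz | hz
  · rw [h2 hz, max_eq_right hz.le, max_eq_right (by linarith : z - r ≤ 0)]
    ring
  · rw [h3 ⟨le_of_eq hz.symm, by linarith⟩]
    rw [max_self, max_eq_right (by linarith : z - r ≤ 0)]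
    simp [hz]
  · rcases le_or_gt z r with hzr | hzr
    · rw [h3 ⟨hz.le, hzr⟩, max_self, max_eq_right (by linarith : z - r ≤ 0),
        max_eq_left hz.le]
      ring
    · rw [h1 hzr, max_eq_left (by linarith : (0:ℝ) ≤ z - r),
        max_eq_left (by linarith : (0:ℝ) ≤ z)]
      nlinarith [hCr]

lemma euc_norm_sq {m : ℕ} (x : EuclideanSpace ℝ (Fin m)) : ‖x‖^2 = ∑ i, x i ^ 2 := by
  rw [← real_inner_self_eq_norm_sq]
  simp only [PiLp.inner_apply, RCLike.inner_apply, conj_trivial, sq]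

/-- Let `φ(w) = inf_s L_σ(w, s; λ)` where
`L_σ(w, s; λ) = (1/2)‖w‖² + C·∑ᵢ max(sᵢ, 0) − ⟨λ, s − Bw − d⟩ + (σ/2)‖s − Bw − d‖²`.
Then `φ` is differentiable at every `w` with gradient
`∇φ(w) = w + Bᵀλ − σ·Bᵀ(s*(w) − Bw − d)`, where, with `z = Bw + d + λ/σ`, the vector
`s*(w)` has `s*(w)ᵢ = zᵢ − C/σ` if `zᵢ > C/σ`, `s*(w)ᵢ = zᵢ` if `zᵢ < 0`, and
`s*(w)ᵢ = 0` if `0 ≤ zᵢ ≤ C/σ`. -/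
theorem stmt_17 (C σ : ℝ) (hC : 0 < C) (hσ : 0 < σ) (m n : ℕ)
    (B : Matrix (Fin m) (Fin n) ℝ) (d lam : EuclideanSpace ℝ (Fin m))
    (φ : EuclideanSpace ℝ (Fin n) → ℝ)
    (hφ : ∀ w : EuclideanSpace ℝ (Fin n),
      φ w = ⨅ s : EuclideanSpace ℝ (Fin m),
        (1 / 2) * ‖w‖ ^ 2 + C * ∑ i, max (s i) 0 - ⟪lam, s - toEuc (B.mulVec w) - d⟫ +
          (σ / 2) * ‖s - toEuc (B.mulVec w) - d‖ ^ 2) :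
    ∀ w : EuclideanSpace ℝ (Fin n), ∀ z sstar : EuclideanSpace ℝ (Fin m),
      z = toEuc (B.mulVec w) + d + σ⁻¹ • lam →
      (∀ i : Fin m,
        (C / σ < z i → sstar i = z i - C / σ) ∧
        (z i < 0 → sstar i = z i) ∧
        (0 ≤ z i ∧ z i ≤ C / σ → sstar i = 0)) →
      HasGradientAt φ
        (w + toEuc (Bᵀ.mulVec lam) -
          σ • toEuc (Bᵀ.mulVec (sstar - toEuc (B.mulVec w) - d))) w := by
  intro w z sstar hzdef hs
  have hσ' : σ ≠ 0 := ne_of_gt hσ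
  have hr : 0 < C / σ := div_pos hC hσ
  set r := C / σ with hrdef
  set zf : EuclideanSpace ℝ (Fin n) → Fin m → ℝ :=
    fun w' i => B.mulVec w' i + d i + σ⁻¹ * lam i with hzf
  set E : EuclideanSpace ℝ (Fin n) → ℝ :=
    fun w' => (1/2 : ℝ) * ‖w'‖^2 - ‖lam‖^2/(2*σ)
      + ∑ i, (σ/2 * max (zf w' i) 0 ^ 2 - σ/2 * max (zf w' i - r) 0 ^ 2) with hE
  -- Step 1: rewrite the Lagrangian
  have hLrw : ∀ (w' : EuclideanSpace ℝ (Fin n)) (s : EuclideanSpace ℝ (Fin m)),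
      (1 / 2) * ‖w'‖ ^ 2 + C * ∑ i, max (s i) 0 - ⟪lam, s - toEuc (B.mulVec w') - d⟫ +
          (σ / 2) * ‖s - toEuc (B.mulVec w') - d‖ ^ 2
      = (1/2 : ℝ) * ‖w'‖^2 - ‖lam‖^2/(2*σ)
        + ∑ i, (C * max (s i) 0 + σ/2 * (s i - zf w' i)^2) := by
    intro w' s
    have hin : ⟪lam, s - toEuc (B.mulVec w') - d⟫
        = ∑ i, lam i * (s i - B.mulVec w' i - d i) := by
      simp [PiLp.inner_apply, RCLike.inner_apply]
      exact Finset.sum_congr rfl fun i _ => mul_comm _ _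
    have hn2 : ‖s - toEuc (B.mulVec w') - d‖^2
        = ∑ i, (s i - B.mulVec w' i - d i)^2 := by
      rw [euc_norm_sq]
      refine Finset.sum_congr rfl fun i _ => ?_
      simp [PiLp.sub_apply]
    have hl2 : ‖lam‖^2 = ∑ i, lam i^2 := euc_norm_sq lam
    have step : ∑ i, (C * max (s i) 0 - lam i * (s i - B.mulVec w' i - d i)
          + σ/2 * (s i - B.mulVec w' i - d i)^2)
        = ∑ i, (C * max (s i) 0 + σ/2 * (s i - zf w' i)^2) - (∑ i, lam i^2)/(2*σ) := by
      rw [Finset.sum_div, ← Finset.sum_sub_distrib]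
      refine Finset.sum_congr rfl fun i _ => ?_
      simp only [hzf]
      field_simp
      ring
    have comb : (∑ i, C * max (s i) 0) - (∑ i, lam i * (s i - B.mulVec w' i - d i))
          + (∑ i, σ/2 * (s i - B.mulVec w' i - d i)^2)
        = ∑ i, (C * max (s i) 0 - lam i * (s i - B.mulVec w' i - d i)
            + σ/2 * (s i - B.mulVec w' i - d i)^2) := by
      rw [← Finset.sum_sub_distrib, ← Finset.sum_add_distrib]
    rw [hin, hn2, hl2, Finset.mul_sum, Finset.mul_sum]
    linarith [step, comb]
  -- Step 2: φ = E
  have keyw : ∀ w', φ w' = E w' := by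
    intro w'
    rw [hφ w']
    have hlow : ∀ s : EuclideanSpace ℝ (Fin m),
        E w' ≤ (1 / 2) * ‖w'‖ ^ 2 + C * ∑ i, max (s i) 0
          - ⟪lam, s - toEuc (B.mulVec w') - d⟫
          + (σ / 2) * ‖s - toEuc (B.mulVec w') - d‖ ^ 2 := by
      intro s
      rw [hLrw w' s]
      simp only [hE]
      have hsum : ∑ i, (σ/2 * max (zf w' i) 0 ^ 2 - σ/2 * max (zf w' i - r) 0 ^ 2)
          ≤ ∑ i, (C * max (s i) 0 + σ/2 * (s i - zf w' i)^2) :=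
        Finset.sum_le_sum fun i _ => env_le hC hσ _ _
      linarith
    refine le_antisymm ?_ (le_ciInf hlow)
    · have hbdd : BddBelow (Set.range fun s : EuclideanSpace ℝ (Fin m) =>
          (1 / 2) * ‖w'‖ ^ 2 + C * ∑ i, max (s i) 0
          - ⟪lam, s - toEuc (B.mulVec w') - d⟫
          + (σ / 2) * ‖s - toEuc (B.mulVec w') - d‖ ^ 2) := by
        refine ⟨E w', ?_⟩
        rintro y ⟨s, rfl⟩
        exact hlow s
      set s0 : EuclideanSpace ℝ (Fin m) := toEuc (fun i =>
        if zf w' i < 0 then zf w' i else if zf w' i ≤ r then 0 else zf w' i - r) with hs0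
      refine (ciInf_le hbdd s0).trans_eq ?_
      rw [hLrw w' s0]
      simp only [hE]
      have hsum : ∑ i, (C * max (s0 i) 0 + σ/2 * (s0 i - zf w' i)^2)
          = ∑ i, (σ/2 * max (zf w' i) 0 ^ 2 - σ/2 * max (zf w' i - r) 0 ^ 2) := by
        refine Finset.sum_congr rfl fun i _ => ?_
        refine env_eq hC hσ (zf w' i) (s0 i) ?_ ?_ ?_
        · intro h
          simp only [hs0, toEuc_apply]
          rw [if_neg (not_lt.mpr (le_trans hr.le h.le)), if_neg (not_le.mpr h)]
        · intro h
          simp only [hs0, toEuc_apply]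
          rw [if_pos h]
        · rintro ⟨h1, h2⟩
          simp only [hs0, toEuc_apply]
          rw [if_neg (not_lt.mpr h1), if_pos h2]
      rw [hsum]
  have hφE : φ = E := funext keyw
  -- Step 3: z and zf agree at w
  have hz_eq : ∀ i, z i = zf w i := by
    intro i
    rw [hzdef]
    simp [hzf, PiLp.add_apply, PiLp.smul_apply]
  have hzs : ∀ i, z i - sstar i = max (z i) 0 - max (z i - r) 0 := by
    intro i
    obtain ⟨h1, h2, h3⟩ := hs i
    rcases lt_trichotomy (z i) 0 with h | h | h
    · rw [h2 h, max_eq_right h.le, max_eq_right (by linarith : z i - r ≤ 0)]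
      ring
    · rw [h3 ⟨le_of_eq h.symm, by linarith⟩, max_eq_right (le_of_eq h),
        max_eq_right (by linarith : z i - r ≤ 0)]
      linarith
    · rcases le_or_gt (z i) r with hzr | hzr
      · rw [h3 ⟨h.le, hzr⟩, max_eq_left h.le, max_eq_right (by linarith : z i - r ≤ 0)]
      · rw [h1 hzr, max_eq_left (by linarith : (0:ℝ) ≤ z i),
          max_eq_left (by linarith : (0:ℝ) ≤ z i - r)]
  -- Step 4: derivative of E
  have hEderiv : HasFDerivAt E
      (((1/2:ℝ) • (2 • (innerSL ℝ w).comp (ContinuousLinearMap.id ℝ (EuclideanSpace ℝ (Fin n)))))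
        + ∑ i, (σ * (max (zf w i) 0 - max (zf w i - r) 0)) •
            (∑ j, B i j • (EuclideanSpace.proj j : EuclideanSpace ℝ (Fin n) →L[ℝ] ℝ))) w := by
    have h1 : HasFDerivAt (fun w' : EuclideanSpace ℝ (Fin n) => (1/2:ℝ) * ‖w'‖^2 - ‖lam‖^2/(2*σ))
        ((1/2:ℝ) • (2 • (innerSL ℝ w).comp (ContinuousLinearMap.id ℝ (EuclideanSpace ℝ (Fin n))))) w :=
      (((hasFDerivAt_id w).norm_sq).const_mul (1/2)).sub_const _
    have h2 : ∀ i : Fin m, HasFDerivAt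
        (fun w' => σ/2 * max (zf w' i) 0 ^ 2 - σ/2 * max (zf w' i - r) 0 ^ 2)
        ((σ * (max (zf w i) 0 - max (zf w i - r) 0)) •
          (∑ j, B i j • (EuclideanSpace.proj j : EuclideanSpace ℝ (Fin n) →L[ℝ] ℝ))) w := by
      intro i
      have hlin : HasFDerivAt (fun w' : EuclideanSpace ℝ (Fin n) => zf w' i)
          (∑ j, B i j • (EuclideanSpace.proj j : EuclideanSpace ℝ (Fin n) →L[ℝ] ℝ)) w := by
        have h : HasFDerivAt (fun w' : EuclideanSpace ℝ (Fin n) => ∑ j, B i j * w' j)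
            (∑ j, B i j • (EuclideanSpace.proj j : EuclideanSpace ℝ (Fin n) →L[ℝ] ℝ)) w :=
          HasFDerivAt.fun_sum fun j _ => by
            simpa using (EuclideanSpace.proj (𝕜 := ℝ) j).hasFDerivAt.const_mul (B i j)
        simpa [hzf, Matrix.mulVec, dotProduct, add_assoc] using
          h.add_const (d i + σ⁻¹ * lam i)
      have hd : HasDerivAt (fun t : ℝ => σ/2 * max t 0 ^ 2 - σ/2 * max (t - r) 0 ^ 2)
          (σ * (max (zf w i) 0 - max (zf w i - r) 0)) (zf w i) := by
        have ha := (relu_sq_hasDerivAt (zf w i)).const_mul (σ/2)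
        have hb0 : HasDerivAt (fun t : ℝ => max (t - r) 0 ^ 2)
            (2 * max (zf w i - r) 0) (zf w i) := by
          have := (relu_sq_hasDerivAt (zf w i - r)).comp (zf w i)
            ((hasDerivAt_id (zf w i)).sub_const r)
          simpa [Function.comp_def] using this
        have hb := hb0.const_mul (σ/2)
        have hab := ha.sub hb
        refine hab.congr_deriv ?_
        ring
      exact hd.comp_hasFDerivAt w hlin
    exact h1.add (HasFDerivAt.fun_sum fun i _ => h2 i)
  -- Step 5: identify the gradient
  rw [hφE, hasGradientAt_iff_hasFDerivAt]
  have mulVecT : ∀ (u : Fin m → ℝ) (j : Fin n), Bᵀ.mulVec u j = ∑ i, B i j * u i := by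
    intro u j
    simp [Matrix.mulVec, dotProduct, Matrix.transpose_apply]
  have coeff : ∀ i, lam i - σ * (sstar i - B.mulVec w i - d i)
      = σ * (max (zf w i) 0 - max (zf w i - r) 0) := by
    intro i
    have h1 : σ * (z i - sstar i) = lam i - σ * (sstar i - B.mulVec w i - d i) := by
      rw [hz_eq i]
      simp only [hzf]
      field_simp
      ring
    rw [← h1, hzs i, hz_eq i]
  have hD : (InnerProductSpace.toDual ℝ (EuclideanSpace ℝ (Fin n)))
        (w + toEuc (Bᵀ.mulVec lam) -
          σ • toEuc (Bᵀ.mulVec (sstar - toEuc (B.mulVec w) - d)))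
      = (((1/2:ℝ) • (2 • (innerSL ℝ w).comp (ContinuousLinearMap.id ℝ (EuclideanSpace ℝ (Fin n)))))
        + ∑ i, (σ * (max (zf w i) 0 - max (zf w i - r) 0)) •
            (∑ j, B i j • (EuclideanSpace.proj j : EuclideanSpace ℝ (Fin n) →L[ℝ] ℝ))) := by
    apply ContinuousLinearMap.ext
    intro v
    simp only [InnerProductSpace.toDual_apply_apply, ContinuousLinearMap.add_apply,
      ContinuousLinearMap.coe_smul', Pi.smul_apply, ContinuousLinearMap.coe_sum',
      Finset.sum_apply, ContinuousLinearMap.coe_comp', Function.comp_apply,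
      ContinuousLinearMap.coe_id', id_eq, innerSL_apply_apply, smul_eq_mul,
      PiLp.inner_apply, RCLike.inner_apply, starRingEnd_apply, star_trivial,
      PiLp.add_apply, PiLp.sub_apply, PiLp.smul_apply, toEuc_apply, mulVecT,
      PiLp.proj_apply, nsmul_eq_mul]
    simp only [WithLp.ofLp_sub, Pi.sub_apply, Pi.mul_apply, Function.comp_apply, id_eq,
      Pi.natCast_apply, Pi.ofNat_apply, innerSL_apply_apply, PiLp.inner_apply, RCLike.inner_apply,
      conj_trivial, Nat.cast_ofNat, toEuc_apply]
    simp only [mul_comm (v _)]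
    have hswap : ∑ i, σ * (max (zf w i) 0 - max (zf w i - r) 0) * ∑ j, B i j * v j
        = ∑ j, (∑ i, σ * (max (zf w i) 0 - max (zf w i - r) 0) * B i j) * v j := by
      simp_rw [Finset.mul_sum, Finset.sum_mul]
      rw [Finset.sum_comm]
      refine Finset.sum_congr rfl fun j _ => Finset.sum_congr rfl fun i _ => by ring
    rw [hswap]
    have hcoe : ∀ j, (w j + ∑ i, B i j * lam i
          - σ * ∑ i, B i j * (sstar i - B.mulVec w i - d i)) * v j
        = (w j + ∑ i, σ * (max (zf w i) 0 - max (zf w i - r) 0) * B i j) * v j := by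
      intro j
      have hsub : (∑ i, B i j * lam i) - σ * ∑ i, B i j * (sstar i - B.mulVec w i - d i)
          = ∑ i, σ * (max (zf w i) 0 - max (zf w i - r) 0) * B i j := by
        rw [Finset.mul_sum, ← Finset.sum_sub_distrib]
        refine Finset.sum_congr rfl fun i _ => ?_
        rw [← coeff i]
        ring
      rw [add_sub_assoc, hsub]
    calc ∑ j, (w j + ∑ i, B i j * lam i
          - σ * ∑ i, B i j * (sstar i - B.mulVec w i - d i)) * v j
        = ∑ j, (w j + ∑ i, σ * (max (zf w i) 0 - max (zf w i - r) 0) * B i j) * v j :=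
          Finset.sum_congr rfl fun j _ => hcoe j
      _ = ∑ j, w j * v j
            + ∑ j, (∑ i, σ * (max (zf w i) 0 - max (zf w i - r) 0) * B i j) * v j := by
          rw [← Finset.sum_add_distrib]
          refine Finset.sum_congr rfl fun j _ => by ring
      _ = (1/2 : ℝ) * (2 * ∑ j, w j * v j)
            + ∑ j, (∑ i, σ * (max (zf w i) 0 - max (zf w i - r) 0) * B i j) * v j := by
          ring
  rw [hD]
  exact hEderiv
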